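/- (Hillam's theorem) Let L > 0, let a < b be real numbers, and let h : [a,b] → [a,b] be an L-Lipschitz function (|h(x) − h(y)| ≤ L|x − y| for all x, y ∈ [a,b]). Fix t with 0 < t ≤ 1/(1+L), let x₀ ∈ [a,b], and define x_{n+1} = (1−t)·x_n + t·h(x_n) for all n ≥ 0. Then the sequence (x_n) is monotone and converges to a fixed point of h. -/

import Mathlib

/-- Hillam's theorem: the Krasnoselskii iteration of an L-Lipschitz self-map
of `[a,b]` with `0 < t ≤ 1/(1+L)` is monotone and converges to a fixed point. -/
theorem stmt_4 (L a b t : ℝ) (hL : 0 < L) (hab : a < b) (h : ℝ → ℝ)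
    (hmaps : ∀ x ∈ Set.Icc a b, h x ∈ Set.Icc a b)
    (hlip : ∀ x ∈ Set.Icc a b, ∀ y ∈ Set.Icc a b, |h x - h y| ≤ L * |x - y|)
    (ht0 : 0 < t) (ht1 : t ≤ 1 / (1 + L))
    (x : ℕ → ℝ) (hx0 : x 0 ∈ Set.Icc a b)
    (hrec : ∀ n, x (n + 1) = (1 - t) * x n + t * h (x n)) :
    (Monotone x ∨ Antitone x) ∧
      ∃ c ∈ Set.Icc a b, h c = c ∧ Filter.Tendsto x Filter.atTop (nhds c) := by
  have hL1 : (0:ℝ) < 1 + L := by linarith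
  have htle : t * (1 + L) ≤ 1 := by
    rw [div_eq_inv_mul] at ht1
    calc t * (1 + L) ≤ ((1 + L)⁻¹ * 1) * (1 + L) := by
          apply mul_le_mul_of_nonneg_right ht1 hL1.le
      _ = 1 := by field_simp
  have ht1' : t ≤ 1 := by nlinarith
  have h1t : (0:ℝ) ≤ 1 - t := by linarith
  -- all iterates stay in [a,b]
  have hmem : ∀ n, x n ∈ Set.Icc a b := by
    intro n
    induction n with
    | zero => exact hx0
    | succ n ih =>
      have hh := hmaps _ ih
      rw [hrec]
      constructor
      · nlinarith [mul_le_mul_of_nonneg_left ih.1 h1t,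
          mul_le_mul_of_nonneg_left hh.1 ht0.le]
      · nlinarith [mul_le_mul_of_nonneg_left ih.2 h1t,
          mul_le_mul_of_nonneg_left hh.2 ht0.le]
  -- key sign-preservation inequality
  have hkey : ∀ n, |h (x (n+1)) - x (n+1) - (1-t)*(h (x n) - x n)|
      ≤ (1-t) * |h (x n) - x n| := by
    intro n
    have e1 : h (x (n+1)) - x (n+1) - (1-t)*(h (x n) - x n)
        = h (x (n+1)) - h (x n) := by rw [hrec]; ring
    have e2 : x (n+1) - x n = t * (h (x n) - x n) := by rw [hrec]; ring
    rw [e1]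
    calc |h (x (n+1)) - h (x n)| ≤ L * |x (n+1) - x n| :=
          hlip _ (hmem (n+1)) _ (hmem n)
      _ = L * t * |h (x n) - x n| := by
          rw [e2, abs_mul, abs_of_nonneg ht0.le]; ring
      _ ≤ (1-t) * |h (x n) - x n| := by
          apply mul_le_mul_of_nonneg_right _ (abs_nonneg _)
          nlinarith
  have hpos : 0 ≤ h (x 0) - x 0 → ∀ n, 0 ≤ h (x n) - x n := by
    intro h0 n
    induction n with
    | zero => exact h0
    | succ n ih =>
      have hk := hkey n
      rw [abs_le, abs_of_nonneg ih] at hk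
      linarith [hk.1]
  have hneg : h (x 0) - x 0 ≤ 0 → ∀ n, h (x n) - x n ≤ 0 := by
    intro h0 n
    induction n with
    | zero => exact h0
    | succ n ih =>
      have hk := hkey n
      rw [abs_le, abs_of_nonpos ih] at hk
      linarith [hk.2]
  -- the limit, when it exists in [a,b], is a fixed point
  have hfix : ∀ c ∈ Set.Icc a b, Filter.Tendsto x Filter.atTop (nhds c) → h c = c := by
    intro c hc hcv
    have hlipOn : LipschitzOnWith (Real.toNNReal L) h (Set.Icc a b) := by
      rw [lipschitzOnWith_iff_dist_le_mul]
      intro p hp q hq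
      rw [Real.dist_eq, Real.dist_eq, Real.coe_toNNReal L hL.le]
      exact hlip _ hp _ hq
    have htw : Filter.Tendsto x Filter.atTop (nhdsWithin c (Set.Icc a b)) :=
      tendsto_nhdsWithin_of_tendsto_nhds_of_eventually_within _ hcv
        (Filter.Eventually.of_forall hmem)
    have h3 : Filter.Tendsto (fun n => h (x n)) Filter.atTop (nhds (h c)) :=
      ((hlipOn.continuousOn c hc).tendsto).comp htw
    have h1 : Filter.Tendsto (fun n => x (n+1)) Filter.atTop (nhds c) :=
      hcv.comp (Filter.tendsto_add_atTop_nat 1)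
    have heq : (fun n => h (x n)) = fun n => (x (n+1) - (1-t) * x n) / t := by
      funext n
      rw [hrec]
      field_simp
      ring
    have h2 : Filter.Tendsto (fun n => h (x n)) Filter.atTop
        (nhds ((c - (1-t) * c) / t)) := by
      rw [heq]
      exact (h1.sub (hcv.const_mul _)).div_const t
    have e3 : (c - (1-t) * c) / t = c := by field_simp; ring
    rw [e3] at h2
    exact tendsto_nhds_unique h3 h2
  rcases le_total (x 0) (h (x 0)) with h0 | h0
  · have hd := hpos (by linarith)
    have hmono : Monotone x := by
      apply monotone_nat_of_le_succ
      intro n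
      have := mul_nonneg ht0.le (hd n)
      rw [hrec]; nlinarith
    have hbdd : BddAbove (Set.range x) := ⟨b, by rintro _ ⟨n, rfl⟩; exact (hmem n).2⟩
    have hconv := tendsto_atTop_ciSup hmono hbdd
    have hcmem : (⨆ n, x n) ∈ Set.Icc a b :=
      ⟨le_trans (hmem 0).1 (le_ciSup hbdd 0), ciSup_le fun n => (hmem n).2⟩
    exact ⟨Or.inl hmono, _, hcmem, hfix _ hcmem hconv, hconv⟩
  · have hd := hneg (by linarith)
    have hanti : Antitone x := by
      apply antitone_nat_of_succ_le
      intro n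
      have := mul_nonpos_of_nonneg_of_nonpos ht0.le (hd n)
      rw [hrec]; nlinarith
    have hbdd : BddBelow (Set.range x) := ⟨a, by rintro _ ⟨n, rfl⟩; exact (hmem n).1⟩
    have hconv := tendsto_atTop_ciInf hanti hbdd
    have hcmem : (⨅ n, x n) ∈ Set.Icc a b :=
      ⟨le_ciInf fun n => (hmem n).1, le_trans (ciInf_le hbdd 0) (hmem 0).2⟩
    exact ⟨Or.inr hanti, _, hcmem, hfix _ hcmem hconv, hconv⟩
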